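/- (Dissipative properties of the high-loss spectrum) Suppose β > 2·ω_max/b_min. Then every ζ ∈ σ(A(β)) satisfies either −Im ζ ≤ ω_max or −Im ζ ≥ β·b_min − ω_max, and β·b_min − ω_max > ω_max. Moreover, for every ζ ∈ σ(A(β)) with −Im ζ ≥ β·b_min − ω_max, the quality factor Q(ζ) = ½·|Re ζ|/(−Im ζ) satisfies 0 ≤ Q(ζ) ≤ ½·ω_max/(β·b_min − ω_max) < ½. -/

import Mathlib

open Matrix
open scoped ComplexOrder

noncomputable section

variable {N : ℕ}

/-- A real matrix viewed as a complex matrix. -/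
def cm (M : Matrix (Fin N) (Fin N) ℝ) : Matrix (Fin N) (Fin N) ℂ :=
  M.map Complex.ofReal

/-- The quadratic matrix pencil `C(ζ,β) = ζ²α + iζ(2θ + βR) − η`. -/
def pencil (α η θ R : Matrix (Fin N) (Fin N) ℝ) (β : ℝ) (ζ : ℂ) :
    Matrix (Fin N) (Fin N) ℂ :=
  ζ ^ 2 • cm α + (Complex.I * ζ) • ((2 : ℂ) • cm θ + (β : ℂ) • cm R) - cm η

/-- `K_p = (√α)⁻¹`. -/
def Kp {α : Matrix (Fin N) (Fin N) ℝ} (hα : (cm α).PosDef) : Matrix (Fin N) (Fin N) ℂ :=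
  (hα.posSemidef.1.eigenvectorUnitary.1 *
    diagonal ((↑) ∘ Real.sqrt ∘ hα.posSemidef.1.eigenvalues) *
    (star hα.posSemidef.1.eigenvectorUnitary : Matrix (Fin N) (Fin N) ℂ))⁻¹

/-- `Φ = √η · K_p`. -/
def Phi {α η : Matrix (Fin N) (Fin N) ℝ} (hα : (cm α).PosDef) (hη : (cm η).PosSemidef) :
    Matrix (Fin N) (Fin N) ℂ :=
  (hη.1.eigenvectorUnitary.1 * diagonal ((↑) ∘ Real.sqrt ∘ hη.1.eigenvalues) *
    (star hη.1.eigenvectorUnitary : Matrix (Fin N) (Fin N) ℂ)) * Kp hα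

/-- `R̃ = K_p R K_p`. -/
def Rt (R : Matrix (Fin N) (Fin N) ℝ) {α : Matrix (Fin N) (Fin N) ℝ} (hα : (cm α).PosDef) :
    Matrix (Fin N) (Fin N) ℂ :=
  Kp hα * cm R * Kp hα

/-- `Ω_p = −2i K_p θ K_p`. -/
def Omp (θ : Matrix (Fin N) (Fin N) ℝ) {α : Matrix (Fin N) (Fin N) ℝ} (hα : (cm α).PosDef) :
    Matrix (Fin N) (Fin N) ℂ :=
  ((-2 : ℂ) * Complex.I) • (Kp hα * cm θ * Kp hα)

/-- `Ω = [[Ω_p, −iΦᵀ],[iΦ, 0]]`. -/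
def Om (θ : Matrix (Fin N) (Fin N) ℝ) {α η : Matrix (Fin N) (Fin N) ℝ}
    (hα : (cm α).PosDef) (hη : (cm η).PosSemidef) :
    Matrix (Fin N ⊕ Fin N) (Fin N ⊕ Fin N) ℂ :=
  fromBlocks (Omp θ hα) ((-Complex.I) • (Phi hα hη)ᵀ) (Complex.I • Phi hα hη) 0

/-- `B = [[R̃, 0],[0, 0]]`. -/
def Bm (R : Matrix (Fin N) (Fin N) ℝ) {α : Matrix (Fin N) (Fin N) ℝ} (hα : (cm α).PosDef) :
    Matrix (Fin N ⊕ Fin N) (Fin N ⊕ Fin N) ℂ :=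
  fromBlocks (Rt R hα) 0 0 0

/-- The system operator `A(β) = Ω − iβB`. -/
def Asys (θ R : Matrix (Fin N) (Fin N) ℝ) {α η : Matrix (Fin N) (Fin N) ℝ}
    (hα : (cm α).PosDef) (hη : (cm η).PosSemidef) (β : ℝ) :
    Matrix (Fin N ⊕ Fin N) (Fin N ⊕ Fin N) ℂ :=
  Om θ hα hη - (Complex.I * (β : ℂ)) • Bm R hα

/-- The ℓ²→ℓ² operator norm of a complex matrix. -/
def opN {n : Type*} [Fintype n] [DecidableEq n] (M : Matrix n n ℂ) : ℝ :=
  ‖Matrix.toEuclideanCLM (𝕜 := ℂ) M‖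

/-- `ω_max = ‖Ω‖`. -/
def omegaMax (θ : Matrix (Fin N) (Fin N) ℝ) {α η : Matrix (Fin N) (Fin N) ℝ}
    (hα : (cm α).PosDef) (hη : (cm η).PosSemidef) : ℝ :=
  opN (Om θ hα hη)

/-- `b_min`, the smallest nonzero eigenvalue of `B`. -/
def bMin (R : Matrix (Fin N) (Fin N) ℝ) {α : Matrix (Fin N) (Fin N) ℝ} (hα : (cm α).PosDef) : ℝ :=
  sInf {r : ℝ | r ≠ 0 ∧ (r : ℂ) ∈ spectrum ℂ (Bm R hα)}

section AuxLemmas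

namespace HLAux

variable {n : Type*} [Fintype n] [DecidableEq n]

omit [DecidableEq n] in
lemma star_dot_self_re_pos {v : n → ℂ} (hv : v ≠ 0) :
    0 < (star v ⬝ᵥ v).re ∧ (star v ⬝ᵥ v).im = 0 := by
  have h : star v ⬝ᵥ v = ((∑ i, Complex.normSq (v i) : ℝ) : ℂ) := by
    simp only [dotProduct, Pi.star_apply, Complex.ofReal_sum]
    exact Finset.sum_congr rfl fun i _ => by
      rw [Complex.star_def, Complex.normSq_eq_conj_mul_self]
  rw [h]
  constructor
  · simp only [Complex.ofReal_re]
    obtain ⟨i, hi⟩ := Function.ne_iff.mp hv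
    exact Finset.sum_pos' (fun j _ => Complex.normSq_nonneg _)
      ⟨i, Finset.mem_univ i, Complex.normSq_pos.mpr hi⟩
  · simp

lemma mem_spectrum_iff_eigen {M : Matrix n n ℂ} {ζ : ℂ} :
    ζ ∈ spectrum ℂ M ↔ ∃ v : n → ℂ, v ≠ 0 ∧ M *ᵥ v = ζ • v := by
  rw [spectrum.mem_iff, Matrix.isUnit_iff_isUnit_det, isUnit_iff_ne_zero, not_not,
    ← Matrix.exists_mulVec_eq_zero_iff]
  constructor
  · rintro ⟨v, hv, h⟩
    refine ⟨v, hv, ?_⟩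
    rw [Matrix.sub_mulVec, Algebra.algebraMap_eq_smul_one, Matrix.smul_mulVec,
      Matrix.one_mulVec, sub_eq_zero] at h
    exact h.symm
  · rintro ⟨v, hv, h⟩
    refine ⟨v, hv, ?_⟩
    rw [Matrix.sub_mulVec, Algebra.algebraMap_eq_smul_one, Matrix.smul_mulVec,
      Matrix.one_mulVec, sub_eq_zero, h]

lemma spec_nonneg {B : Matrix n n ℂ} (hB : B.PosSemidef) {r : ℝ}
    (hr : (r : ℂ) ∈ spectrum ℂ B) : 0 ≤ r := by
  obtain ⟨v, hv0, hv⟩ := mem_spectrum_iff_eigen.mp hr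
  have hq := hB.dotProduct_mulVec_nonneg v
  rw [hv, dotProduct_smul] at hq
  obtain ⟨hre, him⟩ := star_dot_self_re_pos hv0
  rw [Complex.le_def] at hq
  have h1 : ((r : ℂ) • (star v ⬝ᵥ v)).re = r * (star v ⬝ᵥ v).re := by
    simp [Complex.smul_re]
  rw [h1] at hq
  have h2 := hq.1
  simp only [Complex.zero_re] at h2
  nlinarith [h2, hre]

lemma cm_eq_zero {N : ℕ} {M : Matrix (Fin N) (Fin N) ℝ} (h : cm M = 0) : M = 0 := by
  ext i j
  have h2 := congrFun (congrFun (congrArg Matrix.of.symm h) i) j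
  simpa [cm] using h2

lemma Kp_isUnit {N : ℕ} {α : Matrix (Fin N) (Fin N) ℝ} (hα : (cm α).PosDef) :
    IsUnit (Kp hα) := by
  rw [Kp, Matrix.isUnit_nonsing_inv_iff]
  have hD : IsUnit (diagonal ((↑) ∘ Real.sqrt ∘ hα.posSemidef.1.eigenvalues) :
      Matrix (Fin N) (Fin N) ℂ) := by
    rw [Matrix.isUnit_diagonal, Pi.isUnit_iff]
    intro i
    simp only [Function.comp_apply, isUnit_iff_ne_zero, ne_eq, Complex.ofReal_eq_zero]
    exact (Real.sqrt_pos.mpr (hα.eigenvalues_pos i)).ne'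
  exact (Unitary.isUnit_coe.mul hD).mul
    (Unitary.isUnit_coe (U := star hα.posSemidef.1.eigenvectorUnitary))

lemma Rt_ne_zero {N : ℕ} {α : Matrix (Fin N) (Fin N) ℝ} (hα : (cm α).PosDef)
    {R : Matrix (Fin N) (Fin N) ℝ} (hR0 : R ≠ 0) : Rt R hα ≠ 0 := by
  intro h
  apply hR0
  apply cm_eq_zero
  have hKu := Kp_isUnit hα
  have h2 : Kp hα * (cm R * Kp hα) = Kp hα * 0 := by
    rw [mul_zero, ← mul_assoc]
    exact h
  have h3 : cm R * Kp hα = 0 := hKu.mul_left_cancel h2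
  have h4 : cm R * Kp hα = 0 * Kp hα := by rw [h3, zero_mul]
  exact hKu.mul_right_cancel h4

lemma Kp_isHermitian {N : ℕ} {α : Matrix (Fin N) (Fin N) ℝ} (hα : (cm α).PosDef) :
    (Kp hα).IsHermitian :=
  by
  apply IsHermitian.inv
  have hd : (diagonal ((↑) ∘ Real.sqrt ∘ hα.posSemidef.1.eigenvalues) :
      Matrix (Fin N) (Fin N) ℂ)ᴴ = diagonal ((↑) ∘ Real.sqrt ∘ hα.posSemidef.1.eigenvalues) := by
    rw [diagonal_conjTranspose]
    congr 1
    funext i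
    simp
  unfold Matrix.IsHermitian
  rw [conjTranspose_mul, conjTranspose_mul, hd, ← star_eq_conjTranspose, ← star_eq_conjTranspose,
    star_star, Matrix.mul_assoc]

lemma Rt_posSemidef {N : ℕ} {α : Matrix (Fin N) (Fin N) ℝ} (hα : (cm α).PosDef)
    {R : Matrix (Fin N) (Fin N) ℝ} (hR : (cm R).PosSemidef) : (Rt R hα).PosSemidef := by
  have h := hR.conjTranspose_mul_mul_same (Kp hα)
  rw [(Kp_isHermitian hα).eq] at h
  exact h

lemma Bm_posSemidef {N : ℕ} {α : Matrix (Fin N) (Fin N) ℝ} (hα : (cm α).PosDef)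
    {R : Matrix (Fin N) (Fin N) ℝ} (hR : (cm R).PosSemidef) : (Bm R hα).PosSemidef := by
  have hRt := Rt_posSemidef hα hR
  apply Matrix.PosSemidef.of_dotProduct_mulVec_nonneg
  · show (Matrix.fromBlocks (Rt R hα) 0 0 0)ᴴ = Matrix.fromBlocks (Rt R hα) 0 0 0
    rw [Matrix.fromBlocks_conjTranspose]
    simp [hRt.1.eq]
  · intro x
    have hx : x = Sum.elim (x ∘ Sum.inl) (x ∘ Sum.inr) := (Sum.elim_comp_inl_inr x).symm
    rw [hx]
    show 0 ≤ star (Sum.elim (x ∘ Sum.inl) (x ∘ Sum.inr)) ⬝ᵥ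
      (Matrix.fromBlocks (Rt R hα) 0 0 0 *ᵥ Sum.elim (x ∘ Sum.inl) (x ∘ Sum.inr))
    rw [Matrix.fromBlocks_mulVec]
    have hstar : star (Sum.elim (x ∘ Sum.inl) (x ∘ Sum.inr))
        = Sum.elim (star (x ∘ Sum.inl)) (star (x ∘ Sum.inr)) := by
      funext i
      cases i <;> rfl
    rw [hstar]
    simp only [Matrix.zero_mulVec, add_zero, zero_add]
    rw [sumElim_dotProduct_sumElim]
    simpa using hRt.dotProduct_mulVec_nonneg (x ∘ Sum.inl)

lemma Bm_ne_zero {N : ℕ} {α : Matrix (Fin N) (Fin N) ℝ} (hα : (cm α).PosDef)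
    {R : Matrix (Fin N) (Fin N) ℝ} (hR0 : R ≠ 0) : Bm R hα ≠ 0 := by
  intro h
  apply Rt_ne_zero hα hR0
  have h2 := congrArg Matrix.toBlocks₁₁ h
  rw [show Bm R hα = Matrix.fromBlocks (Rt R hα) 0 0 0 from rfl,
    Matrix.toBlocks_fromBlocks₁₁] at h2
  exact h2

end HLAux

end AuxLemmas

namespace HLAux

variable {n : Type*} [Fintype n] [DecidableEq n]

set_option maxHeartbeats 1000000 in
lemma key {W B : Matrix n n ℂ} (hB : B.PosSemidef) (β : ℝ) {ζ : ℂ}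
    (hζ : ζ ∈ spectrum ℂ (W - (Complex.I * (β : ℂ)) • B)) :
    |ζ.re| ≤ opN W ∧
      ∃ μ : ℝ, 0 ≤ μ ∧ (μ : ℂ) ∈ spectrum ℂ B ∧ ‖ζ + Complex.I * β * μ‖ ≤ opN W := by
  classical
  obtain ⟨ω, hωdef⟩ : ∃ ω : ℝ, ω = opN W := ⟨_, rfl⟩
  rw [← hωdef]
  have hωnn : 0 ≤ ω := hωdef ▸ norm_nonneg _
  obtain ⟨v, hv0, hv⟩ := mem_spectrum_iff_eigen.mp hζ
  obtain ⟨u, hu⟩ : ∃ u : EuclideanSpace ℂ n, u = (WithLp.equiv 2 (n → ℂ)).symm v := ⟨_, rfl⟩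
  have hu0 : u ≠ 0 := by
    rw [hu]
    intro h
    exact hv0 ((WithLp.equiv 2 (n → ℂ)).symm.injective (by simpa using h))
  have happ : ∀ (M : Matrix n n ℂ),
      Matrix.toEuclideanCLM (𝕜 := ℂ) M u = (WithLp.equiv 2 (n → ℂ)).symm (M *ᵥ v) := by
    intro M
    rw [hu]
    rfl
  have hinner : ∀ (M : Matrix n n ℂ),
      (inner ℂ u (Matrix.toEuclideanCLM (𝕜 := ℂ) M u) : ℂ) = star v ⬝ᵥ (M *ᵥ v) := by
    intro M
    rw [happ, hu]
    exact dotProduct_comm _ _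
  have hAu : Matrix.toEuclideanCLM (𝕜 := ℂ) (W - (Complex.I * (β : ℂ)) • B) u = ζ • u := by
    rw [happ, hv, hu]
    simp
  have hWB : Matrix.toEuclideanCLM (𝕜 := ℂ) W u
      = ζ • u + (Complex.I * (β : ℂ)) • Matrix.toEuclideanCLM (𝕜 := ℂ) B u := by
    have h := hAu
    rw [map_sub, _root_.map_smul, ContinuousLinearMap.sub_apply,
      ContinuousLinearMap.smul_apply, sub_eq_iff_eq_add] at h
    rw [h]
  obtain ⟨q, hqdef⟩ : ∃ q : ℂ, q = star v ⬝ᵥ (B *ᵥ v) := ⟨_, rfl⟩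
  have hq0 := hB.dotProduct_mulVec_nonneg v
  rw [← hqdef, Complex.le_def] at hq0
  have hqim : q.im = 0 := (hq0.2).symm
  obtain ⟨a, hadef⟩ : ∃ a : ℂ, a = inner ℂ u (Matrix.toEuclideanCLM (𝕜 := ℂ) W u) := ⟨_, rfl⟩
  have hmain : ζ * ((‖u‖ ^ 2 : ℝ) : ℂ) = a - Complex.I * (β : ℂ) * q := by
    have h1 : (inner ℂ u (ζ • u) : ℂ) = ζ * ((‖u‖ ^ 2 : ℝ) : ℂ) := by
      rw [inner_smul_right, inner_self_eq_norm_sq_to_K]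
      push_cast
      rfl
    rw [← h1, ← hAu, map_sub, _root_.map_smul, ContinuousLinearMap.sub_apply,
      ContinuousLinearMap.smul_apply, inner_sub_right, inner_smul_right, hadef, hqdef,
      hinner, hinner]
  have hT : (0 : ℝ) < ‖u‖ ^ 2 := by
    have := norm_pos_iff.mpr hu0
    positivity
  have hre : ζ.re * ‖u‖ ^ 2 = a.re := by
    have h := congrArg Complex.re hmain
    simp only [Complex.mul_re, Complex.mul_im, Complex.sub_re, Complex.ofReal_re,
      Complex.ofReal_im, Complex.I_re, Complex.I_im, hqim] at h
    ring_nf at h ⊢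
    linarith
  have hanorm : ‖a‖ ≤ ω * ‖u‖ ^ 2 := by
    rw [hadef, hωdef]
    calc ‖(inner ℂ u (Matrix.toEuclideanCLM (𝕜 := ℂ) W u) : ℂ)‖
        ≤ ‖u‖ * ‖Matrix.toEuclideanCLM (𝕜 := ℂ) W u‖ := norm_inner_le_norm _ _
    _ ≤ ‖u‖ * (opN W * ‖u‖) := by
        gcongr
        exact (Matrix.toEuclideanCLM (𝕜 := ℂ) W).le_opNorm u
    _ = opN W * ‖u‖ ^ 2 := by ring
  have h1 : |ζ.re| ≤ ω := by
    have h2 : |ζ.re| * ‖u‖ ^ 2 ≤ ω * ‖u‖ ^ 2 := by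
      have h3 : |ζ.re| * ‖u‖ ^ 2 = |a.re| := by
        rw [← hre, abs_mul, abs_of_pos hT]
      rw [h3]
      exact (Complex.abs_re_le_norm a).trans hanorm
    exact le_of_mul_le_mul_right h2 hT
  refine ⟨h1, ?_⟩
  -- spectral theorem for B
  have hsym : (Matrix.toEuclideanLin B).IsSymmetric :=
    Matrix.isHermitian_iff_isSymmetric.mp hB.1
  have hfr : Module.finrank ℂ (EuclideanSpace ℂ n) = Fintype.card n :=
    finrank_euclideanSpace
  obtain ⟨b, hbdef⟩ : ∃ b, b = hsym.eigenvectorBasis hfr := ⟨_, rfl⟩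
  obtain ⟨μ, hμdef⟩ : ∃ μ, μ = hsym.eigenvalues hfr := ⟨_, rfl⟩
  have hgB : ∀ x : EuclideanSpace ℂ n,
      Matrix.toEuclideanCLM (𝕜 := ℂ) B x = Matrix.toEuclideanLin B x := fun _ => rfl
  have happ' : ∀ x : EuclideanSpace ℂ n, Matrix.toEuclideanLin B x
      = (WithLp.equiv 2 (n → ℂ)).symm (B *ᵥ (WithLp.equiv 2 (n → ℂ) x)) := by
    intro x
    rw [← hgB]
    conv_lhs => rw [← (WithLp.equiv 2 (n → ℂ)).symm_apply_apply x]
    rfl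
  have heig : ∀ i, B *ᵥ (WithLp.equiv 2 (n → ℂ) (b i))
      = (μ i : ℂ) • (WithLp.equiv 2 (n → ℂ) (b i)) := by
    intro i
    have h := hsym.apply_eigenvectorBasis hfr i
    rw [← hbdef, ← hμdef] at h
    rw [happ'] at h
    have h2 := congrArg (WithLp.equiv 2 (n → ℂ)) h
    rw [Equiv.apply_symm_apply] at h2
    rw [h2]
    simp
  have hμspec : ∀ i, (μ i : ℂ) ∈ spectrum ℂ B := by
    intro i
    apply mem_spectrum_iff_eigen.mpr
    refine ⟨WithLp.equiv 2 (n → ℂ) (b i), ?_, heig i⟩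
    intro h
    have hbne : (b i : EuclideanSpace ℂ n) ≠ 0 := by
      rw [hbdef]
      exact (hsym.eigenvectorBasis hfr).orthonormal.ne_zero i
    exact hbne ((WithLp.equiv 2 (n → ℂ)).injective (by simpa using h))
  have hμnn : ∀ i, 0 ≤ μ i := fun i => spec_nonneg hB (hμspec i)
  obtain ⟨w, hwdef⟩ : ∃ w : EuclideanSpace ℂ (Fin (Fintype.card n)), w = b.repr u := ⟨_, rfl⟩
  have hrepry : ∀ i, b.repr (Matrix.toEuclideanCLM (𝕜 := ℂ) W u) i
      = (ζ + Complex.I * β * μ i) * w i := by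
    intro i
    rw [hWB, map_add, _root_.map_smul, _root_.map_smul]
    have h2 : b.repr (Matrix.toEuclideanCLM (𝕜 := ℂ) B u) i = (μ i : ℂ) * w i := by
      rw [hgB, hbdef, hμdef, hwdef, hbdef]
      exact hsym.eigenvectorBasis_apply_self_apply hfr u i
    simp only [PiLp.add_apply, PiLp.smul_apply, smul_eq_mul, h2, ← hwdef]
    ring
  have hnorm_eq : ∀ x : EuclideanSpace ℂ n, ‖x‖ ^ 2 = ∑ i, ‖b.repr x i‖ ^ 2 := by
    intro x
    rw [← b.repr.norm_map x, EuclideanSpace.norm_eq, Real.sq_sqrt (by positivity)]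
  have hWu : ‖Matrix.toEuclideanCLM (𝕜 := ℂ) W u‖ ≤ ω * ‖u‖ := by
    rw [hωdef]
    exact (Matrix.toEuclideanCLM (𝕜 := ℂ) W).le_opNorm u
  by_cases hex : ∃ i, w i ≠ 0 ∧ ‖ζ + Complex.I * β * μ i‖ ≤ ω
  · obtain ⟨i, _, hle⟩ := hex
    exact ⟨μ i, hμnn i, hμspec i, hle⟩
  · exfalso
    push_neg at hex
    have hlt : ω ^ 2 * ‖u‖ ^ 2 < ‖Matrix.toEuclideanCLM (𝕜 := ℂ) W u‖ ^ 2 := by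
      rw [hnorm_eq u, hnorm_eq (Matrix.toEuclideanCLM (𝕜 := ℂ) W u), Finset.mul_sum]
      simp only [← hwdef]
      apply Finset.sum_lt_sum
      · intro i _
        rw [hrepry i, norm_mul, mul_pow]
        by_cases hwi : w i = 0
        · simp [hwi]
        · have hled := (hex i hwi).le
          have h3 : (0:ℝ) ≤ ‖w i‖ ^ 2 := by positivity
          exact mul_le_mul_of_nonneg_right (pow_le_pow_left₀ hωnn hled 2) h3
      · obtain ⟨i, hwi⟩ : ∃ i, w i ≠ 0 := by
          by_contra hall
          push_neg at hall
          apply hu0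
          have hw0 : w = 0 := PiLp.ext fun i => by simpa using hall i
          have h4 : u = b.repr.symm w := by
            rw [hwdef, LinearIsometryEquiv.symm_apply_apply]
          rw [h4, hw0, map_zero]
        refine ⟨i, Finset.mem_univ i, ?_⟩
        rw [hrepry i, norm_mul, mul_pow]
        have hltd := hex i hwi
        have h3 : (0:ℝ) < ‖w i‖ ^ 2 := pow_pos (norm_pos_iff.mpr hwi) 2
        exact mul_lt_mul_of_pos_right (pow_lt_pow_left₀ hltd hωnn (by norm_num)) h3
    have hle2 : ‖Matrix.toEuclideanCLM (𝕜 := ℂ) W u‖ ^ 2 ≤ (ω * ‖u‖) ^ 2 := by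
      have h4 := norm_nonneg (Matrix.toEuclideanCLM (𝕜 := ℂ) W u)
      nlinarith
    nlinarith

end HLAux

/-- **Dissipative properties of the high-loss spectrum.** If `β > 2 ω_max / b_min` then every
`ζ ∈ σ(A(β))` has `−Im ζ ≤ ω_max` or `−Im ζ ≥ β b_min − ω_max`, with
`β b_min − ω_max > ω_max`; and for the high-loss eigenvalues the quality factor
`Q(ζ) = ½|Re ζ|/(−Im ζ)` satisfies `0 ≤ Q(ζ) ≤ ½ ω_max/(β b_min − ω_max) < ½`. -/
theorem high_loss_dissipative_properties
    {N : ℕ} (hN : 1 ≤ N)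
    (α η θ R : Matrix (Fin N) (Fin N) ℝ)
    (hα : (cm α).PosDef) (hη : (cm η).PosSemidef)
    (hθ : θᵀ = -θ) (hR : (cm R).PosSemidef) (hR0 : R ≠ 0)
    (β : ℝ) (hβ : 2 * omegaMax θ hα hη / bMin R hα < β) :
    (∀ ζ ∈ spectrum ℂ (Asys θ R hα hη β),
      -ζ.im ≤ omegaMax θ hα hη ∨ β * bMin R hα - omegaMax θ hα hη ≤ -ζ.im) ∧
    omegaMax θ hα hη < β * bMin R hα - omegaMax θ hα hη ∧
    (∀ ζ ∈ spectrum ℂ (Asys θ R hα hη β),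
      β * bMin R hα - omegaMax θ hα hη ≤ -ζ.im →
        0 ≤ 1 / 2 * (|ζ.re| / -ζ.im) ∧
        1 / 2 * (|ζ.re| / -ζ.im) ≤
          1 / 2 * (omegaMax θ hα hη / (β * bMin R hα - omegaMax θ hα hη)) ∧
        1 / 2 * (omegaMax θ hα hη / (β * bMin R hα - omegaMax θ hα hη)) < 1 / 2) := by
  classical
  have hωnn : 0 ≤ omegaMax θ hα hη := by
    have : omegaMax θ hα hη = ‖Matrix.toEuclideanCLM (𝕜 := ℂ) (Om θ hα hη)‖ := rfl
    rw [this]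
    exact norm_nonneg _
  have hBpsd : (Bm R hα).PosSemidef := HLAux.Bm_posSemidef hα hR
  have hBne : Bm R hα ≠ 0 := HLAux.Bm_ne_zero hα hR0
  -- facts about the set of nonzero eigenvalues of B
  have hSfin : {r : ℝ | r ≠ 0 ∧ (r : ℂ) ∈ spectrum ℂ (Bm R hα)}.Finite := by
    apply Set.Finite.subset
      (((Matrix.finite_spectrum (Bm R hα)).preimage
        ((Complex.ofReal_injective).injOn)))
    intro r hr
    exact hr.2
  have hSne : {r : ℝ | r ≠ 0 ∧ (r : ℂ) ∈ spectrum ℂ (Bm R hα)}.Nonempty := by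
    have hherm := hBpsd.1
    by_contra hemp
    rw [Set.not_nonempty_iff_eq_empty] at hemp
    apply hBne
    have hall : ∀ i, hherm.eigenvalues i = 0 := by
      intro i
      by_contra hne
      have hrs : ((hherm.eigenvalues i : ℝ) : ℂ) ∈ spectrum ℂ (Bm R hα) := by
        have h2 := hherm.eigenvalues_mem_spectrum_real i
        have h3 := spectrum.algebraMap_mem ℂ h2
        simpa using h3
      have : hherm.eigenvalues i ∈
          {r : ℝ | r ≠ 0 ∧ (r : ℂ) ∈ spectrum ℂ (Bm R hα)} := ⟨hne, hrs⟩
      rw [hemp] at this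
      exact this
    have hdiag : Matrix.diagonal (RCLike.ofReal ∘ hherm.eigenvalues)
        = (0 : Matrix (Fin N ⊕ Fin N) (Fin N ⊕ Fin N) ℂ) := by
      have : (RCLike.ofReal ∘ hherm.eigenvalues : (Fin N ⊕ Fin N) → ℂ) = 0 := by
        funext i
        simp [hall i]
      rw [this]
      ext i j
      simp [Matrix.diagonal_apply]
    calc Bm R hα = _ := hherm.spectral_theorem
    _ = 0 := by rw [hdiag, map_zero]
  have hSpos : ∀ r ∈ {r : ℝ | r ≠ 0 ∧ (r : ℂ) ∈ spectrum ℂ (Bm R hα)}, 0 < r :=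
    fun r hr => lt_of_le_of_ne (HLAux.spec_nonneg hBpsd hr.2) (Ne.symm hr.1)
  have hbmem : bMin R hα ∈ {r : ℝ | r ≠ 0 ∧ (r : ℂ) ∈ spectrum ℂ (Bm R hα)} :=
    hSne.csInf_mem hSfin
  have hbpos : 0 < bMin R hα := hSpos _ hbmem
  have hblb : ∀ r ∈ {r : ℝ | r ≠ 0 ∧ (r : ℂ) ∈ spectrum ℂ (Bm R hα)}, bMin R hα ≤ r :=
    fun r hr => csInf_le hSfin.bddBelow hr
  have h2ω : 2 * omegaMax θ hα hη < β * bMin R hα := by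
    rw [div_lt_iff₀ hbpos] at hβ
    linarith
  have hβpos : 0 < β := lt_of_le_of_lt (by positivity) hβ
  have hgap : omegaMax θ hα hη < β * bMin R hα - omegaMax θ hα hη := by linarith
  have hmainspec : ∀ ζ ∈ spectrum ℂ (Asys θ R hα hη β),
      |ζ.re| ≤ omegaMax θ hα hη ∧
        (-ζ.im ≤ omegaMax θ hα hη ∨ β * bMin R hα - omegaMax θ hα hη ≤ -ζ.im) := by
    intro ζ hζ
    have hζ' : ζ ∈ spectrum ℂ (Om θ hα hη - (Complex.I * (β : ℂ)) • Bm R hα) := hζ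
    obtain ⟨h1, μ, hμ0, hμspec, habs⟩ := HLAux.key hBpsd β hζ'
    refine ⟨h1, ?_⟩
    rcases eq_or_lt_of_le hμ0 with hμz | hμpos
    · left
      have hζabs : ‖ζ‖ ≤ omegaMax θ hα hη := by
        have : ζ + Complex.I * β * ((0 : ℝ) : ℂ) = ζ := by simp
        rw [← hμz] at habs
        simpa [this, omegaMax] using habs
      calc -ζ.im ≤ |ζ.im| := neg_le_abs ζ.im
      _ ≤ ‖ζ‖ := Complex.abs_im_le_norm ζ
      _ ≤ omegaMax θ hα hη := hζabs
    · right
      have hbμ : bMin R hα ≤ μ := hblb _ ⟨hμpos.ne', hμspec⟩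
      have him : |(ζ + Complex.I * β * μ).im| ≤ omegaMax θ hα hη :=
        (Complex.abs_im_le_norm _).trans habs
      have himeq : (ζ + Complex.I * β * μ).im = ζ.im + β * μ := by
        simp [Complex.add_im, Complex.mul_im, Complex.mul_re]
      rw [himeq, abs_le] at him
      have hμbm : β * bMin R hα ≤ β * μ := by nlinarith
      linarith [him.2]
  refine ⟨fun ζ hζ => (hmainspec ζ hζ).2, hgap, ?_⟩
  intro ζ hζ hhl
  have h1 := (hmainspec ζ hζ).1
  have hd : 0 < -ζ.im := lt_of_lt_of_le (by linarith) hhl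
  refine ⟨by positivity, ?_, ?_⟩
  · have h5 : |ζ.re| / -ζ.im ≤ omegaMax θ hα hη / (β * bMin R hα - omegaMax θ hα hη) :=
      div_le_div₀ hωnn h1 (by linarith) hhl
    linarith
  · have h6 : omegaMax θ hα hη / (β * bMin R hα - omegaMax θ hα hη) < 1 :=
      (div_lt_one (by linarith)).mpr hgap
    linarith
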